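/- Let M1, Y, Z, M2 be finite nonempty sets, let P be a pmf on M1×Y×Z, and let f2 : M1×Y → M2. Let P_{(Z,M2)} be the joint law of (Z, f2(M1,Y)) when (M1,Y,Z) ~ P, let P_Z, P_{M1}, P_Y be the corresponding marginals of P, and let P̄_{M2} be the pushforward of the product P_{M1}⊗P_Y under f2. Then D(P_{(Z,M2)} ‖ P_Z⊗P̄_{M2}) ≤ I_P(M2;Z) + I_P(M1;Y), where I_P(M2;Z) is the mutual information between f2(M1,Y) and Z under P and I_P(M1;Y) is the mutual information between M1 and Y under P. -/

import Mathlib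

open scoped BigOperators Classical

noncomputable section

/-- Kullback–Leibler divergence between two pmfs on a finite set (natural log,
with the convention `0·log(0/q) = 0` encoded by the term vanishing). -/
def KL {Ω : Type} [Fintype Ω] (P Q : Ω → ℝ) : ℝ :=
  ∑ ω, P ω * Real.log (P ω / Q ω)

/-- `P` is a probability mass function on the finite set `Ω`. -/
def IsPMF {Ω : Type} [Fintype Ω] (P : Ω → ℝ) : Prop :=
  (∀ ω, 0 ≤ P ω) ∧ ∑ ω, P ω = 1

/-- Pushforward (law of `φ`) of the pmf `P` under the map `φ`. -/
def pushf {Ω A : Type} [Fintype Ω] (P : Ω → ℝ) (φ : Ω → A) : A → ℝ :=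
  fun a => ∑ ω, if φ ω = a then P ω else 0

/-- Mutual information `I(φA; φB)` under the pmf `P`. -/
def MIof {Ω A B : Type} [Fintype Ω] [Fintype A] [Fintype B]
    (P : Ω → ℝ) (φA : Ω → A) (φB : Ω → B) : ℝ :=
  KL (pushf P fun ω => (φA ω, φB ω)) (fun p => pushf P φA p.1 * pushf P φB p.2)

/-- Shannon entropy of a pmf on a finite set (natural log). -/
def entropy {Ω : Type} [Fintype Ω] (P : Ω → ℝ) : ℝ :=
  -∑ ω, P ω * Real.log (P ω)

end

section Aux

open Real

lemma pushf_nonneg {Ω A : Type} [Fintype Ω] {P : Ω → ℝ} (hP : ∀ ω, 0 ≤ P ω)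
    (φ : Ω → A) (a : A) : 0 ≤ pushf P φ a := by
  refine Finset.sum_nonneg fun ω _ => ?_
  split <;> simp [hP ω]

lemma pushf_pos {Ω A : Type} [Fintype Ω] {P : Ω → ℝ} (hP : ∀ ω, 0 ≤ P ω)
    (φ : Ω → A) {ω : Ω} {a : A} (hφ : φ ω = a) (h : 0 < P ω) :
    0 < pushf P φ a := by
  refine Finset.sum_pos' (fun ω' _ => by split <;> simp [hP ω']) ⟨ω, Finset.mem_univ _, ?_⟩
  rw [if_pos hφ]; exact h

lemma exists_of_pushf_pos {Ω A : Type} [Fintype Ω] {P : Ω → ℝ} (hP : ∀ ω, 0 ≤ P ω)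
    (φ : Ω → A) (a : A) (h : 0 < pushf P φ a) : ∃ ω, φ ω = a ∧ 0 < P ω := by
  by_contra hc
  push_neg at hc
  have : pushf P φ a = 0 := by
    refine Finset.sum_eq_zero fun ω _ => ?_
    split
    · next hφ => exact le_antisymm (hc ω hφ) (hP ω)
    · rfl
  rw [this] at h; exact lt_irrefl _ h

lemma ite_swap_aux {c d : Prop} [Decidable c] [Decidable d] (x : ℝ) :
    (if c then (if d then x else 0) else 0) = (if d then (if c then x else 0) else 0) := by
  split_ifs <;> rfl

lemma pushf_comp {Ω A B : Type} [Fintype Ω] [Fintype A] (P : Ω → ℝ)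
    (φ : Ω → A) (g : A → B) (b : B) :
    pushf P (fun ω => g (φ ω)) b = ∑ a : A, if g a = b then pushf P φ a else 0 := by
  simp only [pushf]
  have h1 : ∀ a : A, (if g a = b then (∑ ω, if φ ω = a then P ω else 0) else 0)
      = ∑ ω, if φ ω = a then (if g a = b then P ω else 0) else 0 := by
    intro a
    split_ifs with h
    · rfl
    · simp
  rw [Finset.sum_congr rfl fun a _ => h1 a, Finset.sum_comm]
  refine Finset.sum_congr rfl fun ω _ => ?_
  rw [Finset.sum_ite_eq]
  simp

/-- Termwise bound for the log-sum inequality. -/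
lemma logsum_term_aux (p q c : ℝ) (hp : 0 ≤ p) (hq : 0 ≤ q) (hac : 0 < p → 0 < q)
    (hc : 0 < c) :
    p - q * c ≤ p * Real.log (p / q) - p * Real.log c := by
  rcases eq_or_lt_of_le hp with h | hp'
  · rw [← h]
    simp only [zero_mul, sub_zero, zero_sub, neg_nonpos]
    nlinarith [mul_nonneg hq hc.le]
  · have hq' := hac hp'
    have h1 : Real.log ((q * c) / p) ≤ (q * c) / p - 1 :=
      Real.log_le_sub_one_of_pos (by positivity)
    have h2 : Real.log ((q * c) / p) = -(Real.log (p / q) - Real.log c) := by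
      rw [Real.log_div (by positivity) hp'.ne', Real.log_mul hq'.ne' hc.ne',
        Real.log_div hp'.ne' hq'.ne']
      ring
    rw [h2] at h1
    have h3 : 1 - (q * c) / p ≤ Real.log (p / q) - Real.log c := by linarith
    have h4 := mul_le_mul_of_nonneg_left h3 hp'.le
    have h5 : p * (1 - (q * c) / p) = p - q * c := by field_simp
    rw [h5, mul_sub] at h4
    exact h4

/-- Log-sum inequality over a finite set, with pointwise absolute continuity. -/
lemma logsum_aux {ι : Type} (s : Finset ι) (p q : ι → ℝ)
    (hp : ∀ i ∈ s, 0 ≤ p i) (hq : ∀ i ∈ s, 0 ≤ q i)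
    (hac : ∀ i ∈ s, 0 < p i → 0 < q i) :
    (∑ i ∈ s, p i) * Real.log ((∑ i ∈ s, p i) / (∑ i ∈ s, q i)) ≤
      ∑ i ∈ s, p i * Real.log (p i / q i) := by
  by_cases hP : ∑ i ∈ s, p i = 0
  · have hall : ∀ i ∈ s, p i = 0 := (Finset.sum_eq_zero_iff_of_nonneg hp).mp hP
    rw [hP, zero_mul]
    refine Finset.sum_nonneg fun i hi => ?_
    rw [hall i hi, zero_mul]
  · have hPpos : 0 < ∑ i ∈ s, p i := (Finset.sum_nonneg hp).lt_of_ne (Ne.symm hP)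
    obtain ⟨i0, hi0, hpi0⟩ : ∃ i ∈ s, 0 < p i := by
      by_contra hcc
      push_neg at hcc
      exact hP (Finset.sum_eq_zero fun i hi => le_antisymm (hcc i hi) (hp i hi))
    have hQpos : 0 < ∑ i ∈ s, q i :=
      Finset.sum_pos' hq ⟨i0, hi0, hac i0 hi0 hpi0⟩
    set Pp := ∑ i ∈ s, p i with hPp
    set Q := ∑ i ∈ s, q i with hQ
    have key : ∀ i ∈ s, p i - q i * (Pp / Q) ≤
        p i * Real.log (p i / q i) - p i * Real.log (Pp / Q) := fun i hi =>
      logsum_term_aux _ _ _ (hp i hi) (hq i hi) (hac i hi) (by positivity)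
    have hsum := Finset.sum_le_sum key
    rw [Finset.sum_sub_distrib, Finset.sum_sub_distrib, ← Finset.sum_mul,
      ← Finset.sum_mul, ← hPp, ← hQ] at hsum
    have e3 : Pp - Q * (Pp / Q) = 0 := by field_simp; ring
    linarith

end Aux

/-- **KL divergence against the product of a marginal and a mismatched message
law.** With `M2 = f2(M1,Y)` and `P̄_{M2}` the pushforward of `P_{M1} ⊗ P_Y`
under `f2`, one has `D(P_{(Z,M2)} ‖ P_Z ⊗ P̄_{M2}) ≤ I_P(M2;Z) + I_P(M1;Y)`. -/
theorem kl_vs_mismatched_message_law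
    (M1 Y Z M2 : Type) [Fintype M1] [Fintype Y] [Fintype Z] [Fintype M2]
    [Nonempty M1] [Nonempty Y] [Nonempty Z] [Nonempty M2]
    (P : M1 × Y × Z → ℝ) (hP : IsPMF P)
    (f2 : M1 × Y → M2) :
    KL (pushf P (fun ω => (ω.2.2, f2 (ω.1, ω.2.1))))
        (fun p => pushf P (fun ω => ω.2.2) p.1 *
          (∑ m1 : M1, ∑ y : Y,
            if f2 (m1, y) = p.2 then
              pushf P (fun ω => ω.1) m1 * pushf P (fun ω => ω.2.1) y
            else 0))
      ≤ MIof P (fun ω => f2 (ω.1, ω.2.1)) (fun ω => ω.2.2)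
        + MIof P (fun ω => ω.1) (fun ω => ω.2.1) := by
  obtain ⟨hP0, -⟩ := hP
  simp only [MIof, KL]
  set PZ : Z → ℝ := pushf P (fun ω => ω.2.2) with hPZdef
  set PM1 : M1 → ℝ := pushf P (fun ω => ω.1) with hPM1def
  set PY : Y → ℝ := pushf P (fun ω => ω.2.1) with hPYdef
  set PZM : Z × M2 → ℝ := pushf P (fun ω => (ω.2.2, f2 (ω.1, ω.2.1))) with hPZMdef
  set PMZ : M2 × Z → ℝ := pushf P (fun ω => (f2 (ω.1, ω.2.1), ω.2.2)) with hPMZdef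
  set PMY : M1 × Y → ℝ := pushf P (fun ω => (ω.1, ω.2.1)) with hPMYdef
  set PM2 : M2 → ℝ := pushf P (fun ω => f2 (ω.1, ω.2.1)) with hPM2def
  set Qb : M2 → ℝ :=
    fun m => ∑ x : M1 × Y, if f2 x = m then PM1 x.1 * PY x.2 else 0 with hQbdef
  have hQb' : ∀ m : M2,
      (∑ m1 : M1, ∑ y : Y, if f2 (m1, y) = m then PM1 m1 * PY y else 0) = Qb m :=
    fun m => (Fintype.sum_prod_type
      (fun x : M1 × Y => if f2 x = m then PM1 x.1 * PY x.2 else 0)).symm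
  simp only [hQb']
  -- marginalization identities
  have H1 : ∀ m, PM2 m = ∑ z, PZM (z, m) := by
    intro m
    have h := pushf_comp P (fun ω => (ω.2.2, f2 (ω.1, ω.2.1))) Prod.snd m
    calc PM2 m = ∑ p : Z × M2, if p.2 = m then PZM p else 0 := h
      _ = ∑ z, PZM (z, m) := by
          rw [Fintype.sum_prod_type]
          refine Finset.sum_congr rfl fun z _ => ?_
          rw [Finset.sum_ite_eq' Finset.univ m (fun m' => PZM (z, m'))]
          simp
  have H2 : ∀ m, PM2 m = ∑ x : M1 × Y, (if f2 x = m then PMY x else 0) :=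
    fun m => pushf_comp P (fun ω => (ω.1, ω.2.1)) f2 m
  -- step A: termwise decomposition of the log
  have keyA : ∀ p : Z × M2,
      PZM p * Real.log (PZM p / (PZ p.1 * Qb p.2)) =
        PZM p * Real.log (PZM p / (PZ p.1 * PM2 p.2)) +
          PZM p * Real.log (PM2 p.2 / Qb p.2) := by
    rintro ⟨z, m⟩
    by_cases h : PZM (z, m) = 0
    · simp [h]
    · have hpos : 0 < PZM (z, m) :=
        (pushf_nonneg hP0 _ _).lt_of_ne (Ne.symm h)
      obtain ⟨ω, hω, hPω⟩ := exists_of_pushf_pos hP0 _ _ hpos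
      have hωz : ω.2.2 = z := (Prod.mk.injEq _ _ _ _ ▸ hω).1
      have hωm : f2 (ω.1, ω.2.1) = m := (Prod.mk.injEq _ _ _ _ ▸ hω).2
      have hz : 0 < PZ z := pushf_pos hP0 _ hωz hPω
      have hm2 : 0 < PM2 m := pushf_pos hP0 _ hωm hPω
      have hm1 : 0 < PM1 ω.1 := pushf_pos hP0 _ rfl hPω
      have hy : 0 < PY ω.2.1 := pushf_pos hP0 _ rfl hPω
      have hQ : 0 < Qb m := by
        rw [hQbdef]
        refine Finset.sum_pos' (fun x _ => ?_) ⟨(ω.1, ω.2.1), Finset.mem_univ _, ?_⟩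
        · split
          · exact mul_nonneg (pushf_nonneg hP0 _ _) (pushf_nonneg hP0 _ _)
          · exact le_rfl
        · rw [if_pos hωm]
          exact mul_pos hm1 hy
      rw [Real.log_div h (by positivity), Real.log_div h (by positivity),
        Real.log_div hm2.ne' hQ.ne', Real.log_mul hz.ne' hQ.ne',
        Real.log_mul hz.ne' hm2.ne']
      ring
  -- step B: marginalize the second log term
  have keyB : ∑ p : Z × M2, PZM p * Real.log (PM2 p.2 / Qb p.2) =
      ∑ m, PM2 m * Real.log (PM2 m / Qb m) := by
    rw [Fintype.sum_prod_type, Finset.sum_comm]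
    refine Finset.sum_congr rfl fun m _ => ?_
    dsimp only
    rw [← Finset.sum_mul, ← H1 m]
  -- step C: identify the first log term with I(M2; Z)
  have keyC : ∑ p : Z × M2, PZM p * Real.log (PZM p / (PZ p.1 * PM2 p.2)) =
      ∑ q : M2 × Z, PMZ q * Real.log (PMZ q / (PM2 q.1 * PZ q.2)) := by
    rw [Fintype.sum_prod_type, Fintype.sum_prod_type, Finset.sum_comm]
    refine Finset.sum_congr rfl fun m _ => Finset.sum_congr rfl fun z _ => ?_
    have hswap : PZM (z, m) = PMZ (m, z) := by
      rw [hPZMdef, hPMZdef]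
      simp only [pushf]
      refine Finset.sum_congr rfl fun ω _ => ?_
      by_cases h1 : ω.2.2 = z <;> by_cases h2 : f2 (ω.1, ω.2.1) = m <;>
        simp [Prod.ext_iff, h1, h2]
    rw [hswap, mul_comm (PZ z) (PM2 m)]
  -- step D: data processing via the log-sum inequality
  have keyD : ∑ m, PM2 m * Real.log (PM2 m / Qb m) ≤
      ∑ x : M1 × Y, PMY x * Real.log (PMY x / (PM1 x.1 * PY x.2)) := by
    have hfib := Finset.sum_fiberwise Finset.univ f2
      (fun x : M1 × Y => PMY x * Real.log (PMY x / (PM1 x.1 * PY x.2)))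
    refine le_trans (Finset.sum_le_sum fun m _ => ?_) (le_of_eq hfib)
    have e1 : ∑ x ∈ Finset.univ.filter (fun x => f2 x = m), PMY x = PM2 m := by
      rw [Finset.sum_filter]; exact (H2 m).symm
    have e2 : ∑ x ∈ Finset.univ.filter (fun x => f2 x = m),
        PM1 x.1 * PY x.2 = Qb m := by
      rw [Finset.sum_filter, hQbdef]
    have hac : ∀ x ∈ Finset.univ.filter (fun x : M1 × Y => f2 x = m),
        0 < PMY x → 0 < PM1 x.1 * PY x.2 := by
      intro x _ hx
      obtain ⟨ω, hω, hPω⟩ := exists_of_pushf_pos hP0 _ _ hx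
      have h1 : ω.1 = x.1 := (Prod.mk.injEq _ _ _ _ ▸ hω).1
      have h2 : ω.2.1 = x.2 := (Prod.mk.injEq _ _ _ _ ▸ hω).2
      exact mul_pos (pushf_pos hP0 _ h1 hPω) (pushf_pos hP0 _ h2 hPω)
    calc PM2 m * Real.log (PM2 m / Qb m)
        = (∑ x ∈ Finset.univ.filter (fun x => f2 x = m), PMY x) *
            Real.log ((∑ x ∈ Finset.univ.filter (fun x => f2 x = m), PMY x) /
              (∑ x ∈ Finset.univ.filter (fun x => f2 x = m), PM1 x.1 * PY x.2)) := by
          rw [e1, e2]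
      _ ≤ _ := logsum_aux _ _ _ (fun x _ => pushf_nonneg hP0 _ _)
          (fun x _ => mul_nonneg (pushf_nonneg hP0 _ _) (pushf_nonneg hP0 _ _)) hac
  calc ∑ p : Z × M2, PZM p * Real.log (PZM p / (PZ p.1 * Qb p.2))
      = ∑ p : Z × M2, (PZM p * Real.log (PZM p / (PZ p.1 * PM2 p.2)) +
          PZM p * Real.log (PM2 p.2 / Qb p.2)) :=
        Finset.sum_congr rfl fun p _ => keyA p
    _ = (∑ p : Z × M2, PZM p * Real.log (PZM p / (PZ p.1 * PM2 p.2))) +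
          ∑ p : Z × M2, PZM p * Real.log (PM2 p.2 / Qb p.2) :=
        Finset.sum_add_distrib
    _ ≤ (∑ q : M2 × Z, PMZ q * Real.log (PMZ q / (PM2 q.1 * PZ q.2))) +
          ∑ x : M1 × Y, PMY x * Real.log (PMY x / (PM1 x.1 * PY x.2)) := by
        rw [keyC, keyB]; exact add_le_add (le_refl _) keyD
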